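/- Every matrix of determinant −1 in GL₂(ℤ) of order 2 is conjugate in GL₂(ℤ) to either S = [[1,0],[0,−1]] or T = [[0,1],[1,0]]. -/

import Mathlib

open Matrix


/-- Representation lemma for the T case: if a²+bc = 1 and b or c is odd, the form
cx² - 2axy - by² of discriminant 4 represents 1. -/
lemma repT (a b c : ℤ) (h : a ^ 2 + b * c = 1) (hodd : Odd b ∨ Odd c) :
    ∃ x y : ℤ, c * x ^ 2 - 2 * a * x * y - b * y ^ 2 = 1 := by
  rcases eq_or_ne c 0 with hc | hc
  · subst hc
    have hb : Odd b := by
      rcases hodd with h' | h'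
      · exact h'
      · simpa using h'
    obtain ⟨n, hn⟩ := hb
    have ha : (a - 1) * (a + 1) = 0 := by linear_combination h
    rcases mul_eq_zero.mp ha with h1 | h1
    · have ha1 : a = 1 := by linarith
      exact ⟨-(n + 1), 1, by subst ha1; subst hn; ring⟩
    · have ha1 : a = -1 := by linarith
      exact ⟨n + 1, 1, by subst ha1; subst hn; ring⟩
  · set g : ℤ := (Int.gcd c (a + 1) : ℤ) with hg
    have hgne : g ≠ 0 := by
      simp only [hg, ne_eq, Int.natCast_eq_zero, Int.gcd_eq_zero_iff]
      tauto
    obtain ⟨c₁, hc₁⟩ : g ∣ c := Int.gcd_dvd_left c (a + 1)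
    obtain ⟨a₁, ha₁⟩ : g ∣ (a + 1) := Int.gcd_dvd_right c (a + 1)
    have hbez0 : g = c * Int.gcdA c (a + 1) + (a + 1) * Int.gcdB c (a + 1) :=
      Int.gcd_eq_gcd_ab c (a + 1)
    set α := Int.gcdA c (a + 1)
    set β := Int.gcdB c (a + 1)
    set x₀ : ℤ := -α with hx₀
    set y₀ : ℤ := β with hy₀
    have hR3 : a₁ * y₀ - c₁ * x₀ = 1 := by
      apply mul_left_cancel₀ hgne
      have : g = (g * c₁) * α + (g * a₁) * β := by rw [← hc₁, ← ha₁]; exact hbez0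
      rw [hx₀, hy₀]; linarith [this]
    have hR1 : c * a₁ = (a + 1) * c₁ := by rw [hc₁, ha₁]; ring
    have hR2 : b * c₁ = (1 - a) * a₁ := by
      apply mul_left_cancel₀ hgne
      have h1 : b * (g * c₁) = (1 - a) * (g * a₁) := by
        rw [← hc₁, ← ha₁]; linear_combination h
      linarith [h1]
    set γ : ℤ := c * x₀ ^ 2 - 2 * a * x₀ * y₀ - b * y₀ ^ 2 with hγ
    have hγodd : Odd γ := by
      rcases hodd with hb | hcodd
      · -- identity: γ * a₁² = -b - 2 x₀ a₁
        have I1 : γ * a₁ ^ 2 = -b - 2 * x₀ * a₁ := by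
          linear_combination (x₀ ^ 2 * a₁) * hR1 + (-(c₁ * x₀ ^ 2) - 2 * x₀) * hR2 +
            (-2 * a * x₀ * a₁ - b * y₀ * a₁ - b * c₁ * x₀ - b) * hR3
        obtain ⟨n, hn⟩ := hb
        have : Odd (γ * a₁ ^ 2) := ⟨-n - 1 - x₀ * a₁, by rw [I1, hn]; ring⟩
        exact (Int.odd_mul.mp this).1
      · have I2 : γ * c₁ ^ 2 = c - 2 * y₀ * c₁ := by
          linear_combination (a₁ * y₀ ^ 2 - 2 * y₀) * hR1 + (-(y₀ ^ 2 * c₁)) * hR2 +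
            (-c * (c₁ * x₀ + a₁ * y₀ - 1) + 2 * a * y₀ * c₁) * hR3
        obtain ⟨n, hn⟩ := hcodd
        have : Odd (γ * c₁ ^ 2) := ⟨n - y₀ * c₁, by rw [I2, hn]; ring⟩
        exact (Int.odd_mul.mp this).1
    obtain ⟨m, hm⟩ := hγodd
    refine ⟨m * a₁ + x₀, m * c₁ + y₀, ?_⟩
    linear_combination (m ^ 2 * a₁ + 2 * m * x₀) * hR1 - (m ^ 2 * c₁ + 2 * m * y₀) * hR2 -
      (2 * m) * hR3 + hm


/-- Representation lemma for the S case: the form c'x² - (2k+1)xy - b'y² of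
discriminant 1 represents 1. -/
lemma repS (k b' c' : ℤ) (h : b' * c' = -k ^ 2 - k) :
    ∃ x y : ℤ, c' * x ^ 2 - (2 * k + 1) * x * y - b' * y ^ 2 = 1 := by
  rcases eq_or_ne c' 0 with hc | hc
  · subst hc
    have hk : k * (k + 1) = 0 := by linarith [h]
    rcases mul_eq_zero.mp hk with hk0 | hk1
    · exact ⟨-(1 + b'), 1, by subst hk0; ring⟩
    · have : k = -1 := by linarith
      exact ⟨1 + b', 1, by subst this; ring⟩
  · set g : ℤ := (Int.gcd c' (k + 1) : ℤ) with hg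
    have hgne : g ≠ 0 := by
      simp only [hg, ne_eq, Int.natCast_eq_zero, Int.gcd_eq_zero_iff]
      tauto
    obtain ⟨c₁, hc₁⟩ : g ∣ c' := Int.gcd_dvd_left c' (k + 1)
    obtain ⟨q₁, hq₁⟩ : g ∣ (k + 1) := Int.gcd_dvd_right c' (k + 1)
    -- Bezout
    have hbez0 : g = c' * Int.gcdA c' (k + 1) + (k + 1) * Int.gcdB c' (k + 1) :=
      Int.gcd_eq_gcd_ab c' (k + 1)
    set α := Int.gcdA c' (k + 1)
    set β := Int.gcdB c' (k + 1)
    set x₀ : ℤ := -α with hx₀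
    set y₀ : ℤ := β with hy₀
    have hR3 : q₁ * y₀ - c₁ * x₀ = 1 := by
      apply mul_left_cancel₀ hgne
      have : g = (g * c₁) * α + (g * q₁) * β := by rw [← hc₁, ← hq₁]; exact hbez0
      rw [hx₀, hy₀]; linarith [this]
    have hR1 : c' * q₁ = (k + 1) * c₁ := by rw [hc₁, hq₁]; ring
    have hR2 : b' * c₁ = -k * q₁ := by
      apply mul_left_cancel₀ hgne
      have h1 : b' * (g * c₁) = -k * (g * q₁) := by
        rw [← hc₁, ← hq₁]; linear_combination h
      linarith [h1]
    set γ : ℤ := c' * x₀ ^ 2 - (2 * k + 1) * x₀ * y₀ - b' * y₀ ^ 2 with hγ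
    refine ⟨(γ - 1) * q₁ + x₀, (γ - 1) * c₁ + y₀, ?_⟩
    linear_combination ((γ - 1) ^ 2 * q₁ + 2 * (γ - 1) * x₀) * hR1 -
      ((γ - 1) ^ 2 * c₁ + 2 * (γ - 1) * y₀) * hR2 - (γ - 1) * hR3

lemma conj_helper (M P N : Matrix (Fin 2) (Fin 2) ℤ) (hP : IsUnit P.det)
    (h : M * P = P * N) : P⁻¹ * M * P = N := by
  calc P⁻¹ * M * P = P⁻¹ * (M * P) := by rw [Matrix.mul_assoc]
    _ = P⁻¹ * (P * N) := by rw [h]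
    _ = P⁻¹ * P * N := by rw [Matrix.mul_assoc]
    _ = N := by rw [Matrix.nonsing_inv_mul _ hP, Matrix.one_mul]

lemma caseT (M : Matrix (Fin 2) (Fin 2) ℤ) (a b c : ℤ)
    (hMe : M = !![a, b; c, -a]) (hkey : a ^ 2 + b * c = 1)
    (hodd : Odd b ∨ Odd c) :
    ∃ P : Matrix (Fin 2) (Fin 2) ℤ, IsUnit P.det ∧ P⁻¹ * M * P = !![0, 1; 1, 0] := by
  obtain ⟨x, y, hQ⟩ := repT a b c hkey hodd
  refine ⟨!![x, a * x + b * y; y, c * x - a * y], ?_, ?_⟩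
  · have hdet : (!![x, a * x + b * y; y, c * x - a * y] : Matrix (Fin 2) (Fin 2) ℤ).det = 1 := by
      rw [Matrix.det_fin_two_of]; linear_combination hQ
    rw [hdet]; exact isUnit_one
  · apply conj_helper
    · have hdet : (!![x, a * x + b * y; y, c * x - a * y] : Matrix (Fin 2) (Fin 2) ℤ).det = 1 := by
        rw [Matrix.det_fin_two_of]; linear_combination hQ
      rw [hdet]; exact isUnit_one
    · rw [hMe, Matrix.mul_fin_two, Matrix.mul_fin_two]
      ext i j
      fin_cases i <;> fin_cases j <;> simp <;>
        first
          | ring1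
          | linear_combination x * hkey
          | linear_combination -x * hkey
          | linear_combination y * hkey
          | linear_combination -y * hkey

lemma caseS (M : Matrix (Fin 2) (Fin 2) ℤ) (k b' c' : ℤ)
    (hMe : M = !![2 * k + 1, b' + b'; c' + c', -(2 * k + 1)])
    (hrel : b' * c' = -k ^ 2 - k) :
    ∃ P : Matrix (Fin 2) (Fin 2) ℤ, IsUnit P.det ∧ P⁻¹ * M * P = !![1, 0; 0, -1] := by
  obtain ⟨x, y, hQ⟩ := repS k b' c' hrel
  set P : Matrix (Fin 2) (Fin 2) ℤ :=
    !![(k + 1) * x + b' * y, -(k * x) - b' * y; c' * x - k * y, -(c' * x) + (k + 1) * y] with hP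
  have hdet : P.det = -1 := by
    rw [hP, Matrix.det_fin_two_of]; linear_combination -hQ
  have hu : IsUnit P.det := by rw [hdet]; exact isUnit_one.neg
  refine ⟨P, hu, ?_⟩
  apply conj_helper _ _ _ hu
  rw [hMe, hP, Matrix.mul_fin_two, Matrix.mul_fin_two]
  ext i j
  fin_cases i <;> fin_cases j <;> simp <;>
    first
      | ring1
      | linear_combination 2 * x * hrel
      | linear_combination -2 * x * hrel
      | linear_combination 2 * y * hrel
      | linear_combination -2 * y * hrel

/-- Every order-2 matrix in `GL₂(ℤ)` of determinant `-1` is conjugate in `GL₂(ℤ)` to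
`S = [[1,0],[0,-1]]` or to `T = [[0,1],[1,0]]`. -/
theorem gl2_det_neg_one_conjugate (M : Matrix (Fin 2) (Fin 2) ℤ)
    (hM : M * M = 1) (hne : M ≠ 1) (hdet : M.det = -1) :
    ∃ P : Matrix (Fin 2) (Fin 2) ℤ, IsUnit P.det ∧
      (P⁻¹ * M * P = !![1, 0; 0, -1] ∨ P⁻¹ * M * P = !![0, 1; 1, 0]) := by
  obtain ⟨a, b, c, d, hMe⟩ : ∃ a b c d, M = !![a, b; c, d] :=
    ⟨_, _, _, _, Matrix.eta_fin_two M⟩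
  have hdet' : a * d - b * c = -1 := by
    rw [hMe, Matrix.det_fin_two_of] at hdet; exact hdet
  have hsq := hM
  rw [hMe, Matrix.mul_fin_two, Matrix.one_fin_two] at hsq
  have e00 : a * a + b * c = 1 := by
    have := congrFun (congrFun hsq 0) 0; simpa using this
  have e11 : c * b + d * d = 1 := by
    have := congrFun (congrFun hsq 1) 1; simpa using this
  have hd : d = -a := by
    have hsum : (a + d) ^ 2 = 0 := by linear_combination e00 + e11 + 2 * hdet'
    have := pow_eq_zero_iff (n := 2) (by norm_num) |>.mp hsum
    linarith
  subst hd
  have hkey : a ^ 2 + b * c = 1 := by linear_combination e00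
  rcases Int.even_or_odd b with hb | hb
  · rcases Int.even_or_odd c with hc | hc
    · -- S case
      obtain ⟨b', rfl⟩ := hb
      obtain ⟨c', rfl⟩ := hc
      have ha : Odd a := by
        rcases Int.even_or_odd a with ⟨t, rfl⟩ | h
        · exfalso
          have h2 : (2 : ℤ) ∣ 1 := ⟨2 * t * t + 2 * b' * c', by linear_combination -hkey⟩
          norm_num at h2
        · exact h
      obtain ⟨k, rfl⟩ := ha
      have hrel : b' * c' = -k ^ 2 - k := by
        have h4 : (4 : ℤ) * (b' * c') = 4 * (-k ^ 2 - k) := by linear_combination hkey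
        exact mul_left_cancel₀ (by norm_num) h4
      obtain ⟨P, h1, h2⟩ := caseS M k b' c' hMe hrel
      exact ⟨P, h1, Or.inl h2⟩
    · obtain ⟨P, h1, h2⟩ := caseT M a b c hMe hkey (Or.inr hc)
      exact ⟨P, h1, Or.inr h2⟩
  · obtain ⟨P, h1, h2⟩ := caseT M a b c hMe hkey (Or.inl hb)
    exact ⟨P, h1, Or.inr h2⟩
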